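/- Define p₂₁(x) = p₂(p₁(x)) = 2x² − x⁴ with p₁(x) = x² and p₂(x) = 2x − x². Then the supremum over x ∈ (0,1) of (p₂₁(x) − p₂₁(x)²)/(x − x²)² equals (71 + 17√17)/32, the same value as for p₁₂ = p₁ ∘ p₂. -/

import Mathlib

open Set

/-- For p₂₁(x) = 2x² − x⁴ (SP2 composite p₂ ∘ p₁), the supremum over x ∈ (0,1) of
(p₂₁(x) − p₂₁(x)²)/(x − x²)² equals (71 + 17√17)/32, the same value as for p₁₂ = p₁ ∘ p₂. -/
theorem sp2_C2_p21 (p₁ p₂ p₂₁ p₁₂ : ℝ → ℝ)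
    (hp₁ : ∀ x : ℝ, p₁ x = x ^ 2) (hp₂ : ∀ x : ℝ, p₂ x = 2 * x - x ^ 2)
    (hp₂₁ : ∀ x : ℝ, p₂₁ x = p₂ (p₁ x)) (hp₁₂ : ∀ x : ℝ, p₁₂ x = p₁ (p₂ x)) :
    sSup ((fun x : ℝ => (p₂₁ x - (p₂₁ x) ^ 2) / (x - x ^ 2) ^ 2) '' Ioo 0 1)
      = (71 + 17 * Real.sqrt 17) / 32 ∧
    sSup ((fun x : ℝ => (p₂₁ x - (p₂₁ x) ^ 2) / (x - x ^ 2) ^ 2) '' Ioo 0 1)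
      = sSup ((fun x : ℝ => (p₁₂ x - (p₁₂ x) ^ 2) / (x - x ^ 2) ^ 2) '' Ioo 0 1) := by
  set s := Real.sqrt 17 with hsdef
  have hs : s ^ 2 = 17 := Real.sq_sqrt (by norm_num)
  have hs0 : (0:ℝ) ≤ s := Real.sqrt_nonneg 17
  have hs4 : 4 < s := by nlinarith
  have hs5 : s < 5 := by nlinarith
  -- simplify the two functions on Ioo 0 1
  have key1 : ∀ x ∈ Ioo (0:ℝ) 1,
      (fun x : ℝ => (p₂₁ x - (p₂₁ x) ^ 2) / (x - x ^ 2) ^ 2) x = (2 - x ^ 2) * (1 + x) ^ 2 := by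
    intro x hx
    have hd : x - x ^ 2 ≠ 0 := by nlinarith [hx.1, hx.2]
    simp only [hp₂₁, hp₂, hp₁]
    rw [div_eq_iff (pow_ne_zero 2 hd)]
    ring
  have key2 : ∀ x ∈ Ioo (0:ℝ) 1,
      (fun x : ℝ => (p₁₂ x - (p₁₂ x) ^ 2) / (x - x ^ 2) ^ 2) x
        = (2 - x) ^ 2 * (1 + 2 * x - x ^ 2) := by
    intro x hx
    have hd : x - x ^ 2 ≠ 0 := by nlinarith [hx.1, hx.2]
    simp only [hp₁₂, hp₂, hp₁]
    rw [div_eq_iff (pow_ne_zero 2 hd)]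
    ring
  have himg1 := Set.image_congr key1
  have himg2 := Set.image_congr key2
  have hG1 : IsGreatest ((fun x : ℝ => (2 - x ^ 2) * (1 + x) ^ 2) '' Ioo 0 1)
      ((71 + 17 * s) / 32) := by
    constructor
    · refine ⟨(s - 1) / 4, ⟨by nlinarith, by nlinarith⟩, ?_⟩
      linear_combination ((17 - 4 * s - s ^ 2) / 256) * hs
    · rintro y ⟨x, hx, rfl⟩
      have h1 : (0:ℝ) < x := hx.1
      have h2 : x < 1 := hx.2
      have hid : (71 + 17 * s) / 32 - (2 - x ^ 2) * (1 + x) ^ 2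
          = (4 * x - s + 1) ^ 2 * (8 * x ^ 2 + (12 + 4 * s) * x + 5 * s + 11) / 128 := by
        linear_combination ((24 * x ^ 2 + 36 * x - 1 - 4 * x * s - 5 * s) / 128) * hs
      have hq : (0:ℝ) ≤ 8 * x ^ 2 + (12 + 4 * s) * x + 5 * s + 11 := by nlinarith
      nlinarith [mul_nonneg (sq_nonneg (4 * x - s + 1)) hq]
  have hG2 : IsGreatest ((fun x : ℝ => (2 - x) ^ 2 * (1 + 2 * x - x ^ 2)) '' Ioo 0 1)
      ((71 + 17 * s) / 32) := by
    constructor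
    · refine ⟨(5 - s) / 4, ⟨by nlinarith, by nlinarith⟩, ?_⟩
      linear_combination ((17 - 4 * s - s ^ 2) / 256) * hs
    · rintro y ⟨x, hx, rfl⟩
      have h1 : (0:ℝ) < x := hx.1
      have h2 : x < 1 := hx.2
      have hid : (71 + 17 * s) / 32 - (2 - x) ^ 2 * (1 + 2 * x - x ^ 2)
          = (4 * x + s - 5) ^ 2 * (8 * x ^ 2 - (28 + 4 * s) * x + 9 * s + 31) / 128 := by
        linear_combination ((24 * x ^ 2 - 84 * x + 59 + 4 * x * s - 9 * s) / 128) * hs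
      have hq : (0:ℝ) ≤ 8 * x ^ 2 - (28 + 4 * s) * x + 9 * s + 31 := by
        nlinarith [mul_nonneg (sub_nonneg.2 h2.le) (show (0:ℝ) ≤ 20 + 4 * s - 8 * x by nlinarith)]
      nlinarith [mul_nonneg (sq_nonneg (4 * x + s - 5)) hq]
  have e1 : sSup ((fun x : ℝ => (p₂₁ x - (p₂₁ x) ^ 2) / (x - x ^ 2) ^ 2) '' Ioo 0 1)
      = (71 + 17 * s) / 32 := by
    rw [himg1]; exact hG1.csSup_eq
  have e2 : sSup ((fun x : ℝ => (p₁₂ x - (p₁₂ x) ^ 2) / (x - x ^ 2) ^ 2) '' Ioo 0 1)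
      = (71 + 17 * s) / 32 := by
    rw [himg2]; exact hG2.csSup_eq
  exact ⟨e1, e1.trans e2.symm⟩
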